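/- Let n ≥ 2 and let t : Fin (n-1) → ZMod 2. Define the Majorana chain Hamiltonian on the interval as the operator H := (1/2)·Σ_{i : Fin (n-1)} (-1)^{(t i).val} · (c_{i+1} ∘ d_i) on Λ = ExteriorAlgebra ℂ (Fin n → ℂ) (here i+1 is the successor in Fin n, no wrap-around, so the operators c_0 and d_{n-1} do not appear in H). Then every eigenvalue of H is real and at least -(n-1)/2, and the eigenspace of H for the eigenvalue -(n-1)/2 is two-dimensional; i.e. the space of ground states of the Majorana chain on an interval with n vertices is two-dimensional. -/

import Mathlib

/-- Left exterior multiplication by the basis vector `δ_v` (the creation operator `ε_v`). -/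
noncomputable def creation {n : ℕ} (v : Fin n) :
    Module.End ℂ (ExteriorAlgebra ℂ (Fin n → ℂ)) :=
  LinearMap.mulLeft ℂ (ExteriorAlgebra.ι ℂ (Pi.single v 1))

/-- Left contraction (interior product) by the dual basis functional `δ_v^*`
(the annihilation operator `ι_v`). -/
noncomputable def annihilation {n : ℕ} (v : Fin n) :
    Module.End ℂ (ExteriorAlgebra ℂ (Fin n → ℂ)) :=
  CliffordAlgebra.contractLeft (Q := (0 : QuadraticForm ℂ (Fin n → ℂ)))
    (LinearMap.proj v)

/-- The Majorana operator `c_v = ε_v + ι_v`. -/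
noncomputable def majoranaC {n : ℕ} (v : Fin n) :
    Module.End ℂ (ExteriorAlgebra ℂ (Fin n → ℂ)) :=
  creation v + annihilation v

/-- The Majorana operator `d_v = ε_v - ι_v`. -/
noncomputable def majoranaD {n : ℕ} (v : Fin n) :
    Module.End ℂ (ExteriorAlgebra ℂ (Fin n → ℂ)) :=
  creation v - annihilation v

namespace Maj
variable {n : ℕ}

lemma creation_apply (v : Fin n) (x) :
    creation v x = ExteriorAlgebra.ι ℂ (Pi.single v 1) * x := rfl

lemma ann_gen_mul (v w : Fin n) (x : ExteriorAlgebra ℂ (Fin n → ℂ)) :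
    annihilation v (ExteriorAlgebra.ι ℂ (Pi.single w 1) * x)
      = (if v = w then (1:ℂ) else 0) • x
        - ExteriorAlgebra.ι ℂ (Pi.single w 1) * annihilation v x := by
  rw [annihilation, CliffordAlgebra.contractLeft_ι_mul]
  congr 2
  simp [LinearMap.proj, Pi.single_apply, eq_comm]

lemma ann_one (v : Fin n) : annihilation v (1 : ExteriorAlgebra ℂ (Fin n → ℂ)) = 0 :=
  CliffordAlgebra.contractLeft_one _ _

/-- Product of generators indexed by a list. -/
noncomputable def E : List (Fin n) → ExteriorAlgebra ℂ (Fin n → ℂ)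
  | [] => 1
  | v :: l => ExteriorAlgebra.ι ℂ (Pi.single v 1) * E l

lemma E_nil : (E ([] : List (Fin n))) = 1 := rfl
lemma E_cons (v : Fin n) (l : List (Fin n)) :
    E (v :: l) = ExteriorAlgebra.ι ℂ (Pi.single v 1 : Fin n → ℂ) * E l := rfl

lemma gen_swap (v w : Fin n) (x : ExteriorAlgebra ℂ (Fin n → ℂ)) :
    ExteriorAlgebra.ι ℂ (Pi.single v 1) * (ExteriorAlgebra.ι ℂ (Pi.single w 1) * x)
      = -(ExteriorAlgebra.ι ℂ (Pi.single w 1) * (ExteriorAlgebra.ι ℂ (Pi.single v 1) * x)) := by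
  have h := ExteriorAlgebra.ι_add_mul_swap (R := ℂ) (Pi.single v 1 : Fin n → ℂ) (Pi.single w 1)
  have : (ExteriorAlgebra.ι ℂ (Pi.single v (1:ℂ)) * ExteriorAlgebra.ι ℂ (Pi.single w 1)) * x
      = -((ExteriorAlgebra.ι ℂ (Pi.single w (1:ℂ)) * ExteriorAlgebra.ι ℂ (Pi.single v 1)) * x) := by
    rw [eq_neg_iff_add_eq_zero.mpr h]
    simp [neg_mul]
  simpa [mul_assoc] using this

lemma ann_E_of_not_mem {v : Fin n} : ∀ {l : List (Fin n)}, v ∉ l → annihilation v (E l) = 0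
  | [], _ => ann_one v
  | w :: l, h => by
    have hvw : v ≠ w := fun hh => h (hh ▸ List.mem_cons_self (a := w) (l := l))
    have hvl : v ∉ l := fun hh => h (List.mem_cons_of_mem _ hh)
    rw [E, ann_gen_mul, if_neg hvw, ann_E_of_not_mem hvl, zero_smul, mul_zero, sub_zero]

/-- Iterated annihilation operators. -/
noncomputable def A : List (Fin n) → Module.End ℂ (ExteriorAlgebra ℂ (Fin n → ℂ))
  | [] => 1
  | v :: l => A l * annihilation v

lemma amap_gen_mul (v : Fin n) (y : ExteriorAlgebra ℂ (Fin n → ℂ)) :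
    ExteriorAlgebra.algebraMapInv (ExteriorAlgebra.ι ℂ (Pi.single v 1 : Fin n → ℂ) * y) = 0 := by
  rw [map_mul]
  simp [ExteriorAlgebra.algebraMapInv]

lemma L3 {w : Fin n} : ∀ {s : List (Fin n)}, w ∉ s →
    ∀ y, ExteriorAlgebra.algebraMapInv (A s (ExteriorAlgebra.ι ℂ (Pi.single w 1 : Fin n → ℂ) * y)) = 0
  | [], _, y => by simpa [A] using amap_gen_mul w y
  | u :: s, h, y => by
    have huw : u ≠ w := fun hh => h (hh ▸ List.mem_cons_self (a := u) (l := s))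
    have hws : w ∉ s := fun hh => h (List.mem_cons_of_mem _ hh)
    rw [A, Module.End.mul_apply, ann_gen_mul, if_neg huw, zero_smul, zero_sub, map_neg, map_neg,
      L3 hws]
    simp

lemma key : ∀ (s : List (Fin n)), s.Pairwise (· < ·) → ∀ (t : List (Fin n)), t.Pairwise (· < ·) →
    ExteriorAlgebra.algebraMapInv (A s (E t)) = if s = t then 1 else 0
  | [], _, [], _ => by simp [A, E]
  | [], _, w :: t', _ => by
    rw [A, E, Module.End.one_apply, amap_gen_mul, eq_comm, if_neg (by simp)]
  | v :: s', hs, [], _ => by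
    rw [A, E, Module.End.mul_apply, ann_one, map_zero, map_zero, if_neg (by simp)]
  | v :: s', hs, w :: t', ht => by
    have hs' : s'.Pairwise (· < ·) := (List.pairwise_cons.mp hs).2
    have ht' : t'.Pairwise (· < ·) := (List.pairwise_cons.mp ht).2
    rw [A, E, Module.End.mul_apply, ann_gen_mul]
    by_cases hvw : v = w
    · subst hvw
      have hvt' : v ∉ t' := fun hh => lt_irrefl v ((List.pairwise_cons.mp ht).1 v hh)
      rw [if_pos rfl, ann_E_of_not_mem hvt', mul_zero, sub_zero, one_smul, key s' hs' t' ht']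
      by_cases h : s' = t'
      · simp [h]
      · rw [if_neg h, if_neg (by simpa using h)]
    · rw [if_neg hvw, zero_smul, zero_sub, map_neg, map_neg]
      by_cases hvt : v ∈ t'
      · have hwv : w < v := (List.pairwise_cons.mp ht).1 v hvt
        have hws' : w ∉ s' := fun hh => lt_irrefl w
          (lt_trans hwv ((List.pairwise_cons.mp hs).1 w hh))
        rw [L3 hws', neg_zero, if_neg (by simp [hvw])]
      · rw [ann_E_of_not_mem hvt, mul_zero, map_zero, map_zero, neg_zero,
          if_neg (by simp [hvw])]

/-- Candidate basis vectors indexed by finsets. -/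
noncomputable def bS (S : Finset (Fin n)) : ExteriorAlgebra ℂ (Fin n → ℂ) :=
  E (S.sort (· ≤ ·))

lemma key_bS (T S : Finset (Fin n)) :
    ExteriorAlgebra.algebraMapInv (A (T.sort (· ≤ ·)) (bS S)) = if T = S then 1 else 0 := by
  rw [bS, key _ (T.sortedLT_sort.pairwise) _ (S.sortedLT_sort.pairwise)]
  congr 1
  simp only [eq_iff_iff]
  constructor
  · intro h
    have := congrArg List.toFinset h
    simpa [Finset.sort_toFinset] using this
  · rintro rfl; rfl

lemma bS_linearIndependent : LinearIndependent ℂ (bS (n := n)) := by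
  rw [Fintype.linearIndependent_iff]
  intro g hg T
  have := congrArg (fun x => ExteriorAlgebra.algebraMapInv (A (T.sort (· ≤ ·)) x)) hg
  simp only [map_sum, map_smul, key_bS, smul_eq_mul, mul_ite, mul_one, mul_zero,
    Finset.sum_ite_eq, Finset.mem_univ, if_pos, map_zero] at this
  exact this

lemma gen_mul_E : ∀ (t : List (Fin n)), t.Pairwise (· < ·) → ∀ v : Fin n,
    ∃ (c : ℂ) (u : List (Fin n)), u.Pairwise (· < ·) ∧ (∀ x ∈ u, x = v ∨ x ∈ t) ∧
      ExteriorAlgebra.ι ℂ (Pi.single v 1 : Fin n → ℂ) * E t = c • E u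
  | [], _, v => ⟨1, [v], List.pairwise_singleton _ v, by simp, by simp [E]⟩
  | w :: t', ht, v => by
    have ht' : t'.Pairwise (· < ·) := (List.pairwise_cons.mp ht).2
    rcases lt_trichotomy v w with hvw | hvw | hvw
    · refine ⟨1, v :: w :: t', ?_, ?_, by simp [E]⟩
      · rw [List.pairwise_cons]
        exact ⟨fun b hb => by
          rcases List.mem_cons.mp hb with rfl | hb
          · exact hvw
          · exact lt_trans hvw ((List.pairwise_cons.mp ht).1 b hb), ht⟩
      · intro x hx
        rcases List.mem_cons.mp hx with rfl | hx
        · exact Or.inl rfl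
        · exact Or.inr hx
    · subst hvw
      refine ⟨0, [], List.Pairwise.nil, by simp, ?_⟩
      rw [E_cons, ← mul_assoc, ExteriorAlgebra.ι_sq_zero, zero_mul, zero_smul]
    · obtain ⟨c, u, hu, husub, heq⟩ := gen_mul_E t' ht' v
      refine ⟨-c, w :: u, ?_, ?_, ?_⟩
      · rw [List.pairwise_cons]
        refine ⟨fun b hb => ?_, hu⟩
        rcases husub b hb with rfl | hb
        · exact hvw
        · exact (List.pairwise_cons.mp ht).1 b hb
      · intro x hx
        rcases List.mem_cons.mp hx with rfl | hx
        · exact Or.inr (List.mem_cons_self)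
        · rcases husub x hx with rfl | hx'
          · exact Or.inl rfl
          · exact Or.inr (List.mem_cons_of_mem _ hx')
      · rw [E_cons, E_cons, gen_swap, heq]
        simp [mul_smul_comm]

lemma E_sorted_mem_span {u : List (Fin n)} (hu : u.Pairwise (· < ·)) :
    E u ∈ Submodule.span ℂ (Set.range (bS (n := n))) := by
  have : bS u.toFinset = E u := by
    rw [bS, (List.toFinset_sort (r := (· ≤ ·)) hu.nodup).mpr (hu.imp le_of_lt)]
  exact this ▸ Submodule.subset_span ⟨u.toFinset, rfl⟩

lemma gen_mul_mem_span (v : Fin n) {x : ExteriorAlgebra ℂ (Fin n → ℂ)}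
    (hx : x ∈ Submodule.span ℂ (Set.range (bS (n := n)))) :
    ExteriorAlgebra.ι ℂ (Pi.single v 1 : Fin n → ℂ) * x
      ∈ Submodule.span ℂ (Set.range (bS (n := n))) := by
  induction hx using Submodule.span_induction with
  | mem x hxm =>
    obtain ⟨S, rfl⟩ := hxm
    obtain ⟨c, u, hu, -, heq⟩ := gen_mul_E (S.sort (· ≤ ·)) S.sortedLT_sort.pairwise v
    rw [bS, heq]
    exact Submodule.smul_mem _ _ (E_sorted_mem_span hu)
  | zero => simpa using Submodule.zero_mem _
  | add x y _ _ hx hy => rw [mul_add]; exact Submodule.add_mem _ hx hy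
  | smul c x _ hx => rw [mul_smul_comm]; exact Submodule.smul_mem _ _ hx

lemma E_mul_mem_span : ∀ (l : List (Fin n)) {x : ExteriorAlgebra ℂ (Fin n → ℂ)},
    x ∈ Submodule.span ℂ (Set.range (bS (n := n))) →
    E l * x ∈ Submodule.span ℂ (Set.range (bS (n := n)))
  | [], x, hx => by simpa [E] using hx
  | v :: l, x, hx => by
    rw [E, mul_assoc]
    exact gen_mul_mem_span v (E_mul_mem_span l hx)

lemma span_bS_eq_top : Submodule.span ℂ (Set.range (bS (n := n))) = ⊤ := by
  rw [eq_top_iff]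
  intro x hx
  clear hx
  induction x using ExteriorAlgebra.induction with
  | algebraMap r =>
    rw [Algebra.algebraMap_eq_smul_one]
    refine Submodule.smul_mem _ _ ?_
    have : bS (∅ : Finset (Fin n)) = 1 := by simp [bS, E]
    exact this ▸ Submodule.subset_span ⟨∅, rfl⟩
  | ι m =>
    have hm : m = ∑ v : Fin n, m v • (Pi.single v 1 : Fin n → ℂ) := by
      ext j; simp [Pi.single_apply]
    rw [hm, map_sum]
    refine Submodule.sum_mem _ fun v _ => ?_
    rw [map_smul]
    refine Submodule.smul_mem _ _ ?_
    have : bS ({v} : Finset (Fin n)) = ExteriorAlgebra.ι ℂ (Pi.single v 1 : Fin n → ℂ) := by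
      simp [bS, E, Finset.sort_singleton]
    exact this ▸ Submodule.subset_span ⟨{v}, rfl⟩
  | mul a b ha hb =>
    induction ha using Submodule.span_induction with
    | mem a ham =>
      obtain ⟨S, rfl⟩ := ham
      exact E_mul_mem_span _ hb
    | zero => simpa using Submodule.zero_mem _
    | add x y _ _ hx hy => rw [add_mul]; exact Submodule.add_mem _ hx hy
    | smul c x _ hx => rw [smul_mul_assoc]; exact Submodule.smul_mem _ _ hx
  | add a b ha hb => exact Submodule.add_mem _ ha hb

/-- A basis of the exterior algebra indexed by finsets. -/
noncomputable def exteriorBasis : Module.Basis (Finset (Fin n)) ℂ (ExteriorAlgebra ℂ (Fin n → ℂ)) :=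
  Module.Basis.mk bS_linearIndependent (by rw [span_bS_eq_top])

instance : FiniteDimensional ℂ (ExteriorAlgebra ℂ (Fin n → ℂ)) :=
  Module.Finite.of_basis (exteriorBasis (n := n))

lemma finrank_exterior :
    Module.finrank ℂ (ExteriorAlgebra ℂ (Fin n → ℂ)) = 2 ^ n := by
  rw [Module.finrank_eq_card_basis (exteriorBasis (n := n)), Fintype.card_finset,
    Fintype.card_fin]

end Maj

namespace Maj
variable {n : ℕ}

lemma car_ac (v w : Fin n) :
    annihilation v * creation w + creation w * annihilation v
      = (if v = w then (1:ℂ) else 0) • 1 := by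
  refine LinearMap.ext fun x => ?_
  simp only [LinearMap.add_apply, Module.End.mul_apply, creation_apply,
    LinearMap.smul_apply, Module.End.one_apply, ann_gen_mul]
  abel

lemma car_aa (v w : Fin n) :
    annihilation v * annihilation w + annihilation w * annihilation v = 0 := by
  refine LinearMap.ext fun x => ?_
  simp only [LinearMap.add_apply, Module.End.mul_apply, LinearMap.zero_apply, annihilation]
  rw [CliffordAlgebra.contractLeft_comm]
  abel

lemma car_cc (v w : Fin n) :
    creation v * creation w + creation w * creation v = 0 := by
  refine LinearMap.ext fun x => ?_
  simp only [LinearMap.add_apply, Module.End.mul_apply, creation_apply, LinearMap.zero_apply]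
  rw [← mul_assoc, ← mul_assoc, ← add_mul, ExteriorAlgebra.ι_add_mul_swap, zero_mul]

lemma CC (v w : Fin n) : majoranaC v * majoranaC w + majoranaC w * majoranaC v
    = (if v = w then (2:ℂ) else 0) • 1 := by
  have h1 := car_cc v w
  have h2 := car_aa v w
  have h3 := car_ac v w
  have h4 := car_ac w v
  have expand : majoranaC v * majoranaC w + majoranaC w * majoranaC v
      = ((creation v * creation w + creation w * creation v)
        + (annihilation v * annihilation w + annihilation w * annihilation v))
        + ((annihilation v * creation w + creation w * annihilation v)
        + (annihilation w * creation v + creation v * annihilation w)) := by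
    simp only [majoranaC]
    noncomm_ring
  rw [expand, h1, h2, h3, h4]
  by_cases h : v = w
  · subst h
    simp only [if_pos rfl]
    rw [zero_add, zero_add, ← add_smul]
    norm_num
  · simp [h, Ne.symm h]

lemma DD (v w : Fin n) : majoranaD v * majoranaD w + majoranaD w * majoranaD v
    = (if v = w then (-2:ℂ) else 0) • 1 := by
  have h1 := car_cc v w
  have h2 := car_aa v w
  have h3 := car_ac v w
  have h4 := car_ac w v
  have expand : majoranaD v * majoranaD w + majoranaD w * majoranaD v
      = ((creation v * creation w + creation w * creation v)
        + (annihilation v * annihilation w + annihilation w * annihilation v))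
        - ((annihilation v * creation w + creation w * annihilation v)
        + (annihilation w * creation v + creation v * annihilation w)) := by
    simp only [majoranaD]
    refine LinearMap.ext fun x => ?_
    simp only [LinearMap.add_apply, LinearMap.sub_apply, Module.End.mul_apply, map_add, map_sub]
    abel
  rw [expand, h1, h2, h3, h4]
  by_cases h : v = w
  · subst h
    simp only [if_pos rfl]
    rw [zero_add, zero_sub, ← add_smul, ← neg_smul]
    congr 1; norm_num
  · simp [h, Ne.symm h]

lemma CD (v w : Fin n) : majoranaC v * majoranaD w + majoranaD w * majoranaC v = 0 := by
  have h1 := car_cc v w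
  have h2 := car_aa v w
  have h3 := car_ac v w
  have h4 := car_ac w v
  have expand : majoranaC v * majoranaD w + majoranaD w * majoranaC v
      = ((creation v * creation w + creation w * creation v)
        - (annihilation v * annihilation w + annihilation w * annihilation v))
        + ((annihilation v * creation w + creation w * annihilation v)
        - (annihilation w * creation v + creation v * annihilation w)) := by
    simp only [majoranaC, majoranaD]
    refine LinearMap.ext fun x => ?_
    simp only [LinearMap.add_apply, LinearMap.sub_apply, Module.End.mul_apply, map_add, map_sub]
    abel
  rw [expand, h1, h2, h3, h4]
  by_cases h : v = w
  · subst h; simp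
  · simp [h, Ne.symm h]

lemma C_sq (v : Fin n) : majoranaC v * majoranaC v = 1 := by
  have := CC v v
  rw [if_pos rfl] at this
  have h2 : (2:ℂ) • (majoranaC v * majoranaC v) = (2:ℂ) • (1 : Module.End ℂ _) :=
    calc (2:ℂ) • (majoranaC v * majoranaC v)
        = majoranaC v * majoranaC v + majoranaC v * majoranaC v := two_smul ℂ _
      _ = (2:ℂ) • 1 := this
  exact smul_right_injective _ (by norm_num : (2:ℂ) ≠ 0) h2

lemma D_sq (v : Fin n) : majoranaD v * majoranaD v = -1 := by
  have := DD v v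
  rw [if_pos rfl] at this
  have h2 : (2:ℂ) • (majoranaD v * majoranaD v) = (2:ℂ) • (-1 : Module.End ℂ _) :=
    calc (2:ℂ) • (majoranaD v * majoranaD v)
        = majoranaD v * majoranaD v + majoranaD v * majoranaD v := two_smul ℂ _
      _ = (-2:ℂ) • 1 := this
      _ = (2:ℂ) • (-1 : Module.End ℂ _) := by module
  exact smul_right_injective _ (by norm_num : (2:ℂ) ≠ 0) h2

lemma CC_ne {v w : Fin n} (h : v ≠ w) :
    majoranaC v * majoranaC w + majoranaC w * majoranaC v = 0 := by
  rw [CC, if_neg h, zero_smul]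

lemma DD_ne {v w : Fin n} (h : v ≠ w) :
    majoranaD v * majoranaD w + majoranaD w * majoranaD v = 0 := by
  rw [DD, if_neg h, zero_smul]

/-- Anticommuting endomorphisms. -/
def AC (x y : Module.End ℂ (ExteriorAlgebra ℂ (Fin n → ℂ))) : Prop := x * y + y * x = 0

lemma AC.symm {x y : Module.End ℂ (ExteriorAlgebra ℂ (Fin n → ℂ))} (h : AC x y) : AC y x := by
  unfold AC at *
  rw [add_comm]
  exact h

lemma AC.smul_left {x y : Module.End ℂ (ExteriorAlgebra ℂ (Fin n → ℂ))} (c : ℂ) (h : AC x y) :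
    AC (c • x) y := by
  unfold AC at *
  rw [smul_mul_assoc, mul_smul_comm, ← smul_add, h, smul_zero]

lemma AC.smul_right {x y : Module.End ℂ (ExteriorAlgebra ℂ (Fin n → ℂ))} (c : ℂ) (h : AC x y) :
    AC x (c • y) := (h.symm.smul_left c).symm

lemma AC.add_left {x y z : Module.End ℂ (ExteriorAlgebra ℂ (Fin n → ℂ))}
    (h1 : AC x z) (h2 : AC y z) : AC (x + y) z := by
  unfold AC at *
  rw [add_mul, mul_add]
  calc x * z + y * z + (z * x + z * y) = (x * z + z * x) + (y * z + z * y) := by abel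
    _ = 0 := by rw [h1, h2, add_zero]

lemma AC.sub_left {x y z : Module.End ℂ (ExteriorAlgebra ℂ (Fin n → ℂ))}
    (h1 : AC x z) (h2 : AC y z) : AC (x - y) z := by
  have := h1.add_left (h2.smul_left (-1))
  rw [show x - y = x + (-1:ℂ) • y from LinearMap.ext fun a => by simp [sub_eq_add_neg]]
  exact this

lemma AC.add_right {x y z : Module.End ℂ (ExteriorAlgebra ℂ (Fin n → ℂ))}
    (h1 : AC z x) (h2 : AC z y) : AC z (x + y) := (h1.symm.add_left h2.symm).symm

lemma AC.sub_right {x y z : Module.End ℂ (ExteriorAlgebra ℂ (Fin n → ℂ))}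
    (h1 : AC z x) (h2 : AC z y) : AC z (x - y) := (h1.symm.sub_left h2.symm).symm

lemma AC.mul_eq {x y : Module.End ℂ (ExteriorAlgebra ℂ (Fin n → ℂ))} (h : AC x y) :
    x * y = -(y * x) := eq_neg_of_add_eq_zero_left h

lemma comm_of_AC_AC {x u v : Module.End ℂ (ExteriorAlgebra ℂ (Fin n → ℂ))}
    (h1 : AC x u) (h2 : AC x v) : x * (u * v) = (u * v) * x := by
  calc x * (u * v) = (x * u) * v := by rw [mul_assoc]
    _ = (-(u * x)) * v := by rw [h1.mul_eq]
    _ = -(u * (x * v)) := by rw [← mul_assoc]; exact neg_mul (u * x) v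
    _ = -(u * (-(v * x))) := by rw [h2.mul_eq]
    _ = u * (v * x) := by exact (congrArg Neg.neg (mul_neg u (v * x))).trans (neg_neg _)
    _ = (u * v) * x := by rw [mul_assoc]

end Maj

namespace Maj
section Edge
variable {n : ℕ} (t : Fin (n - 1) → ZMod 2)

def va (i : Fin (n - 1)) : Fin n := ⟨i.val, by have := i.isLt; omega⟩
def vb (i : Fin (n - 1)) : Fin n := ⟨i.val + 1, by have := i.isLt; omega⟩

noncomputable def Ci (i : Fin (n - 1)) : Module.End ℂ (ExteriorAlgebra ℂ (Fin n → ℂ)) :=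
  majoranaC (vb i)
noncomputable def Di (i : Fin (n - 1)) : Module.End ℂ (ExteriorAlgebra ℂ (Fin n → ℂ)) :=
  majoranaD (va i)

def sg (i : Fin (n - 1)) : ℂ := (-1 : ℂ) ^ (t i).val

noncomputable def fE (i : Fin (n - 1)) : Module.End ℂ (ExteriorAlgebra ℂ (Fin n → ℂ)) :=
  (2⁻¹ : ℂ) • (sg t i • Ci i - Di i)
noncomputable def gE (i : Fin (n - 1)) : Module.End ℂ (ExteriorAlgebra ℂ (Fin n → ℂ)) :=
  (2⁻¹ : ℂ) • (sg t i • Ci i + Di i)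
noncomputable def AE (i : Fin (n - 1)) : Module.End ℂ (ExteriorAlgebra ℂ (Fin n → ℂ)) :=
  sg t i • (Ci i * Di i)
noncomputable def PE (i : Fin (n - 1)) : Module.End ℂ (ExteriorAlgebra ℂ (Fin n → ℂ)) :=
  fE t i * gE t i

lemma AE_eq (i : Fin (n - 1)) : AE t i
    = ((-1 : ℂ) ^ (t i).val) •
        (majoranaC (⟨i.val + 1, by have := i.isLt; omega⟩ : Fin n) ∘ₗ
          majoranaD (⟨i.val, by have := i.isLt; omega⟩ : Fin n)) := by
  simp only [AE, sg, Ci, Di, vb, va, Module.End.mul_eq_comp]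

lemma sg_sq (i : Fin (n - 1)) : sg t i * sg t i = 1 := by
  rw [sg, ← pow_add]
  exact Even.neg_one_pow ⟨(t i).val, rfl⟩

lemma Ci_sq (i : Fin (n - 1)) : Ci (n := n) i * Ci i = 1 := C_sq (vb i)
lemma Di_sq (i : Fin (n - 1)) : Di (n := n) i * Di i = -1 := D_sq (va i)

lemma DC_eq (i : Fin (n - 1)) : Di i * Ci i = -(Ci i * Di i) :=
  (AC.symm (CD (vb i) (va i))).mul_eq

lemma smul_mul_expand (a b : ℂ) (X Y : Module.End ℂ (ExteriorAlgebra ℂ (Fin n → ℂ))) :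
    (a • X) * (b • Y) = (a * b) • (X * Y) := by
  rw [smul_mul_assoc, mul_smul_comm, smul_smul]

lemma PE_eq (i : Fin (n - 1)) : PE t i = (2⁻¹ : ℂ) • (1 + AE t i) := by
  rw [PE, fE, gE, smul_mul_expand]
  have expand : (sg t i • Ci i - Di i) * (sg t i • Ci i + Di i)
      = (sg t i * sg t i) • (Ci i * Ci i) + sg t i • (Ci i * Di i)
        - sg t i • (Di i * Ci i) - Di i * Di i := by
    rw [sub_mul, mul_add, mul_add, smul_mul_expand, smul_mul_assoc, mul_smul_comm]
    abel
  rw [expand, sg_sq, Ci_sq, Di_sq, DC_eq, AE]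
  module

lemma gf_eq (i : Fin (n - 1)) : gE t i * fE t i = 1 - PE t i := by
  rw [PE_eq, gE, fE, smul_mul_expand]
  have expand : (sg t i • Ci i + Di i) * (sg t i • Ci i - Di i)
      = (sg t i * sg t i) • (Ci i * Ci i) - sg t i • (Ci i * Di i)
        + sg t i • (Di i * Ci i) - Di i * Di i := by
    rw [add_mul, mul_sub, mul_sub, smul_mul_expand, smul_mul_assoc, mul_smul_comm]
    abel
  rw [expand, sg_sq, Ci_sq, Di_sq, DC_eq, AE]
  module

lemma ff_eq (i : Fin (n - 1)) : fE t i * fE t i = 0 := by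
  rw [fE, smul_mul_expand]
  have expand : (sg t i • Ci i - Di i) * (sg t i • Ci i - Di i)
      = (sg t i * sg t i) • (Ci i * Ci i) - sg t i • (Ci i * Di i)
        - sg t i • (Di i * Ci i) + Di i * Di i := by
    rw [sub_mul, mul_sub, mul_sub, smul_mul_expand, smul_mul_assoc, mul_smul_comm]
    abel
  rw [expand, sg_sq, Ci_sq, Di_sq, DC_eq]
  module

lemma gg_eq (i : Fin (n - 1)) : gE t i * gE t i = 0 := by
  rw [gE, smul_mul_expand]
  have expand : (sg t i • Ci i + Di i) * (sg t i • Ci i + Di i)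
      = (sg t i * sg t i) • (Ci i * Ci i) + sg t i • (Ci i * Di i)
        + sg t i • (Di i * Ci i) + Di i * Di i := by
    rw [add_mul, mul_add, mul_add, smul_mul_expand, smul_mul_assoc, mul_smul_comm]
    abel
  rw [expand, sg_sq, Ci_sq, Di_sq, DC_eq]
  module

lemma va_injective : Function.Injective (va (n := n)) := fun i j h => by
  have := congrArg Fin.val h
  simp only [va] at this
  exact Fin.ext this

lemma vb_injective : Function.Injective (vb (n := n)) := fun i j h => by
  have := congrArg Fin.val h
  simp only [vb] at this
  exact Fin.ext (by omega)

lemma AC_CC {i j : Fin (n - 1)} (hij : i ≠ j) : AC (Ci i) (Ci j) :=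
  CC_ne (fun h => hij (vb_injective h))

lemma AC_DD {i j : Fin (n - 1)} (hij : i ≠ j) : AC (Di i) (Di j) :=
  DD_ne (fun h => hij (va_injective h))

lemma AC_CD (i j : Fin (n - 1)) : AC (Ci i) (Di j) := CD (vb i) (va j)

lemma AC_ffgg {i j : Fin (n - 1)} (hij : i ≠ j) (e₁ e₂ : Bool) :
    AC ((2⁻¹ : ℂ) • (sg t i • Ci i + (if e₁ then 1 else -1 : ℂ) • Di i))
       ((2⁻¹ : ℂ) • (sg t j • Ci j + (if e₂ then 1 else -1 : ℂ) • Di j)) := by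
  apply AC.smul_left
  apply AC.smul_right
  apply AC.add_left
  · apply AC.smul_left
    apply AC.add_right
    · exact (AC_CC hij).smul_right _
    · exact (AC_CD i j).smul_right _
  · apply AC.smul_left
    apply AC.add_right
    · exact ((AC_CD j i).symm).smul_right _
    · exact (AC_DD hij).smul_right _

lemma fE_eq_bool (i : Fin (n - 1)) :
    fE t i = (2⁻¹ : ℂ) • (sg t i • Ci i + (if false then 1 else -1 : ℂ) • Di i) := by
  rw [fE]
  congr 1
  simp [sub_eq_add_neg]
  exact (neg_one_smul ℂ (Di i)).symm

lemma gE_eq_bool (i : Fin (n - 1)) :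
    gE t i = (2⁻¹ : ℂ) • (sg t i • Ci i + (if true then 1 else -1 : ℂ) • Di i) := by
  rw [gE]
  congr 1
  simp

lemma AC_ff {i j : Fin (n - 1)} (hij : i ≠ j) : AC (fE t i) (fE t j) := by
  rw [fE_eq_bool, fE_eq_bool]; exact AC_ffgg t hij false false
lemma AC_fg {i j : Fin (n - 1)} (hij : i ≠ j) : AC (fE t i) (gE t j) := by
  rw [fE_eq_bool, gE_eq_bool]; exact AC_ffgg t hij false true
lemma AC_gf {i j : Fin (n - 1)} (hij : i ≠ j) : AC (gE t i) (fE t j) := by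
  rw [fE_eq_bool, gE_eq_bool]; exact AC_ffgg t hij true false
lemma AC_gg {i j : Fin (n - 1)} (hij : i ≠ j) : AC (gE t i) (gE t j) := by
  rw [gE_eq_bool, gE_eq_bool]; exact AC_ffgg t hij true true

lemma fP_comm {i j : Fin (n - 1)} (hij : i ≠ j) : fE t i * PE t j = PE t j * fE t i :=
  comm_of_AC_AC (AC_ff t hij) (AC_fg t hij)

lemma gP_comm {i j : Fin (n - 1)} (hij : i ≠ j) : gE t i * PE t j = PE t j * gE t i :=
  comm_of_AC_AC (AC_gf t hij) (AC_gg t hij)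

lemma PP_comm {i j : Fin (n - 1)} (hij : i ≠ j) : PE t i * PE t j = PE t j * PE t i := by
  calc PE t i * PE t j = fE t i * (gE t i * PE t j) := by rw [PE, mul_assoc]
    _ = fE t i * (PE t j * gE t i) := by rw [gP_comm t hij]
    _ = (fE t i * PE t j) * gE t i := by rw [mul_assoc]
    _ = (PE t j * fE t i) * gE t i := by rw [fP_comm t hij]
    _ = PE t j * PE t i := by rw [mul_assoc]; rfl

end Edge
end Maj


section RingLemmas
variable {R : Type*} [Ring R]

/-- Ordered product `f 0 * f 1 * ⋯ * f (N-1)` in a possibly noncommutative ring. -/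
def PP (f : ℕ → R) (N : ℕ) : R := ((List.range N).map f).prod

@[simp] lemma PP_zero (f : ℕ → R) : PP f 0 = 1 := rfl

lemma PP_succ (f : ℕ → R) (N : ℕ) : PP f (N + 1) = PP f N * f N := by
  simp [PP, List.range_succ]

lemma PP_succ' (f : ℕ → R) (N : ℕ) : PP f (N + 1) = f 0 * PP (fun m => f (m + 1)) N := by
  simp [PP, List.range_succ_eq_map, List.map_map, Function.comp_def]

lemma PP_congr {f g : ℕ → R} (h : ∀ m, f m = g m) (N : ℕ) : PP f N = PP g N := by
  simp [PP, funext h]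

lemma push_prod (p : R) (a b : ℕ → R) (h : ∀ m, p * a m = b m * p) :
    ∀ N, p * PP a N = PP b N * p
  | 0 => by simp
  | N + 1 => by
    rw [PP_succ, PP_succ, ← mul_assoc, push_prod p a b h N, mul_assoc, h, ← mul_assoc]

lemma key_annihilate {ι : Type*} [DecidableEq ι] (s : Finset ι) (P : ι → R)
    (idem : ∀ i ∈ s, P i * P i = P i)
    (comm : ∀ i ∈ s, ∀ j ∈ s, P i * P j = P j * P i) :
    PP (fun m => (∑ i ∈ s, P i) - (m : R)) (s.card + 1) = 0 := by
  induction s using Finset.induction_on with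
  | empty => rw [PP_succ]; simp
  | @insert a s ha ih =>
    have idem' : ∀ i ∈ s, P i * P i = P i := fun i hi => idem i (Finset.mem_insert_of_mem hi)
    have comm' : ∀ i ∈ s, ∀ j ∈ s, P i * P j = P j * P i := fun i hi j hj =>
      comm i (Finset.mem_insert_of_mem hi) j (Finset.mem_insert_of_mem hj)
    have ih' := ih idem' comm'
    set x := ∑ i ∈ s, P i with hx
    set p := P a with hp
    have hpx : p * x = x * p := by
      rw [Finset.mul_sum, Finset.sum_mul]
      exact Finset.sum_congr rfl fun i hi =>
        comm a (Finset.mem_insert_self a s) i (Finset.mem_insert_of_mem hi)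
    have hpp : p * p = p := idem a (Finset.mem_insert_self a s)
    have hsum : ∑ i ∈ insert a s, P i = p + x := Finset.sum_insert ha
    rw [Finset.card_insert_of_notMem ha, hsum]
    have h1 : ∀ m : ℕ, p * ((p + x) - (m : R)) = ((x + 1) - (m : R)) * p := by
      intro m
      have hc : (m : R) * p = p * (m : R) := (Nat.cast_commute m p).eq
      rw [mul_sub, mul_add, hpp, hpx, sub_mul, add_mul, one_mul, hc]
      abel
    have h2 : ∀ m : ℕ, (1 - p) * ((p + x) - (m : R)) = (x - (m : R)) * (1 - p) := by
      intro m
      have hc : (m : R) * p = p * (m : R) := (Nat.cast_commute m p).eq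
      rw [sub_mul, one_mul, mul_sub, mul_add, hpp, hpx, mul_sub, mul_one, sub_mul, hc]
      abel
    have e1 := push_prod p _ _ h1 (s.card + 2)
    have e2 := push_prod (1 - p) _ _ h2 (s.card + 2)
    have z1 : PP (fun m => (x + 1) - (m : R)) (s.card + 2) = 0 := by
      rw [PP_succ']
      have : PP (fun m => (x + 1) - ((m + 1 : ℕ) : R)) (s.card + 1)
          = PP (fun m => x - (m : R)) (s.card + 1) :=
        PP_congr (fun m => by push_cast; abel) _
      rw [this, ih', mul_zero]
    have z2 : PP (fun m => x - (m : R)) (s.card + 2) = 0 := by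
      rw [PP_succ, ih', zero_mul]
    have hsplit : p + (1 - p) = (1 : R) := by abel
    have split : PP (fun m => (p + x) - (m : R)) (s.card + 1 + 1)
        = p * PP (fun m => (p + x) - (m : R)) (s.card + 2)
          + (1 - p) * PP (fun m => (p + x) - (m : R)) (s.card + 2) := by
      rw [← add_mul, hsplit, one_mul]
    rw [split, e1, e2, z1, z2, zero_mul, zero_mul, add_zero]

lemma ground_annihilate {ι : Type*} [DecidableEq ι] (s : Finset ι) (P : ι → R)
    (idem : ∀ i ∈ s, P i * P i = P i)
    (comm : ∀ i ∈ s, ∀ j ∈ s, P i * P j = P j * P i)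
    (j : ι) (hj : j ∈ s) :
    P j * PP (fun m => (∑ i ∈ s, P i) - ((m : R) + 1)) s.card = 0 := by
  set x := ∑ i ∈ s.erase j, P i with hx
  have hsum : ∑ i ∈ s, P i = P j + x := by
    rw [hx, ← Finset.add_sum_erase s P hj]
  have hpx : P j * x = x * P j := by
    rw [Finset.mul_sum, Finset.sum_mul]
    exact Finset.sum_congr rfl fun i hi =>
      comm j hj i (Finset.mem_of_mem_erase hi)
  have hpp : P j * P j = P j := idem j hj
  have h : ∀ m : ℕ, P j * ((∑ i ∈ s, P i) - ((m : R) + 1)) = (x - (m : R)) * P j := by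
    intro m
    have hc : (m : R) * P j = P j * (m : R) := (Nat.cast_commute m (P j)).eq
    rw [hsum, mul_sub, mul_add, hpp, hpx, mul_add, mul_one, sub_mul, hc]
    abel
  rw [push_prod (P j) _ _ h]
  have hcard : s.card = (s.erase j).card + 1 := by
    rw [Finset.card_erase_of_mem hj]
    have : 0 < s.card := Finset.card_pos.mpr ⟨j, hj⟩
    omega
  rw [hcard, key_annihilate (s.erase j) P
    (fun i hi => idem i (Finset.mem_of_mem_erase hi))
    (fun i hi k hk => comm i (Finset.mem_of_mem_erase hi) k (Finset.mem_of_mem_erase hk)),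
    zero_mul]
lemma idem_of (P F G : R) (hfg : F * G = P) (hgf : G * F = 1 - P)
    (hff : F * F = 0) (hgg : G * G = 0) : P * P = P := by
  rw [← hfg]
  calc (F * G) * (F * G) = F * ((G * F) * G) := by noncomm_ring
    _ = F * ((1 - P) * G) := by rw [hgf]
    _ = F * G - F * ((F * G) * G) := by rw [← hfg]; noncomm_ring
    _ = F * G - (F * F) * (G * G) := by noncomm_ring
    _ = F * G := by rw [hff, hgg]; noncomm_ring

end RingLemmas

lemma PP_eigen {V : Type} [AddCommGroup V] [Module ℂ V] (T : Module.End ℂ V) (x : V) (ν : ℂ)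
    (hx : T x = ν • x) (c : ℕ → ℂ) :
    ∀ N, (PP (fun m => T - c m • 1) N) x = (∏ m ∈ Finset.range N, (ν - c m)) • x
  | 0 => by simp [PP]
  | N + 1 => by
    rw [PP_succ, Finset.prod_range_succ, Module.End.mul_apply]
    have h : (T - c N • 1) x = (ν - c N) • x := by
      simp [LinearMap.sub_apply, hx, sub_smul]
    rw [h, map_smul, PP_eigen T x ν hx c N, smul_smul, mul_comm]


open Module

section DimLemmas
variable {V : Type} [AddCommGroup V] [Module ℂ V]

lemma restrict_mul (a b : Module.End ℂ V) (p : Submodule ℂ V)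
    (ha : ∀ x ∈ p, a x ∈ p) (hb : ∀ x ∈ p, b x ∈ p) :
    (a.restrict ha) * (b.restrict hb) = (a * b).restrict (fun x hx => ha _ (hb x hx)) := by
  ext x
  simp [LinearMap.restrict_apply]

/-- An idempotent with a "square root factorization" splits the space into two
halves of equal dimension. -/
lemma half_dim [FiniteDimensional ℂ V] (P f g : Module.End ℂ V)
    (hfg : f * g = P) (hgf : g * f = 1 - P) (hff : f * f = 0) (hgg : g * g = 0) :
    2 * finrank ℂ (LinearMap.ker P) = finrank ℂ V := by
  have hrn := LinearMap.finrank_range_add_finrank_ker P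
  -- build equiv ker P ≃ range P
  have hFmem : ∀ x : LinearMap.ker P, f (x : V) ∈ LinearMap.range P := by
    rintro ⟨x, hx⟩
    refine ⟨f x, ?_⟩
    have := congrArg (fun T : Module.End ℂ V => T x) hgf
    simp only [Module.End.mul_apply, LinearMap.sub_apply, Module.End.one_apply] at this
    have hPx : P x = 0 := hx
    have h1 : g (f x) = x := by rw [this, hPx]; abel
    have := congrArg (fun T : Module.End ℂ V => T (f x)) hfg
    simp only [Module.End.mul_apply] at this
    calc P (f x) = f (g (f x)) := this.symm
      _ = f x := by rw [h1]
  have hGmem : ∀ y : LinearMap.range P, g (y : V) ∈ LinearMap.ker P := by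
    rintro ⟨y, z, rfl⟩
    have h1 : P (g (P z)) = f (g (g (P z))) := by
      have := congrArg (fun T : Module.End ℂ V => T (g (P z))) hfg
      simpa [Module.End.mul_apply] using this.symm
    have h2 : g (g (P z)) = 0 := by
      have := congrArg (fun T : Module.End ℂ V => T (P z)) hgg
      simpa [Module.End.mul_apply] using this
    simp [LinearMap.mem_ker, h1, h2]
  let F : LinearMap.ker P →ₗ[ℂ] LinearMap.range P :=
    LinearMap.codRestrict _ (f ∘ₗ (LinearMap.ker P).subtype) hFmem
  let G : LinearMap.range P →ₗ[ℂ] LinearMap.ker P :=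
    LinearMap.codRestrict _ (g ∘ₗ (LinearMap.range P).subtype) hGmem
  have hGF : ∀ x : LinearMap.ker P, G (F x) = x := by
    rintro ⟨x, hx⟩
    apply Subtype.ext
    have := congrArg (fun T : Module.End ℂ V => T x) hgf
    simp only [Module.End.mul_apply, LinearMap.sub_apply, Module.End.one_apply] at this
    have hPx : P x = 0 := hx
    show g (f x) = x
    simp only [F, G, LinearMap.codRestrict_apply, LinearMap.comp_apply,
      Submodule.subtype_apply, this, hPx]
    abel
  have hFG : ∀ y : LinearMap.range P, F (G y) = y := by
    rintro ⟨y, z, rfl⟩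
    apply Subtype.ext
    have h1 : f (g (P z)) = P (P z) := by
      have := congrArg (fun T : Module.End ℂ V => T (P z)) hfg
      simpa [Module.End.mul_apply] using this
    have hPP : P * P = P := by
      rw [← hfg]
      calc (f * g) * (f * g) = f * ((g * f) * g) := by noncomm_ring
        _ = f * ((1 - P) * g) := by rw [hgf]
        _ = f * g - f * ((f * g) * g) := by rw [← hfg]; noncomm_ring
        _ = f * g - (f * f) * (g * g) := by noncomm_ring
        _ = f * g := by rw [hff, hgg]; noncomm_ring
    have h2 : P (P z) = P z := by
      have := congrArg (fun T : Module.End ℂ V => T z) hPP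
      simpa [Module.End.mul_apply] using this
    show f (g (P z)) = P z
    simp only [F, G, LinearMap.codRestrict_apply, LinearMap.comp_apply,
      Submodule.subtype_apply, h1, h2]
  let e : LinearMap.ker P ≃ₗ[ℂ] LinearMap.range P :=
    LinearEquiv.ofLinear F G (by ext y; exact congrArg Subtype.val (hFG y))
      (by ext x; exact congrArg Subtype.val (hGF x))
  have := e.finrank_eq
  omega

lemma iInf_fin_succ {α : Type*} [CompleteLattice α] {k : ℕ} (f : Fin (k + 1) → α) :
    ⨅ i, f i = f 0 ⊓ ⨅ i : Fin k, f i.succ := by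
  apply le_antisymm
  · exact le_inf (iInf_le _ 0) (le_iInf fun i => iInf_le _ i.succ)
  · refine le_iInf fun i => ?_
    induction i using Fin.cases with
    | zero => exact inf_le_left
    | succ j => exact le_trans inf_le_right (iInf_le _ j)

lemma dim_joint_ker : ∀ (k : ℕ) (V : Type) [AddCommGroup V] [Module ℂ V]
    [FiniteDimensional ℂ V] (P f g : Fin k → Module.End ℂ V),
    (∀ i, f i * g i = P i) → (∀ i, g i * f i = 1 - P i) →
    (∀ i, f i * f i = 0) → (∀ i, g i * g i = 0) →
    (∀ i j, i ≠ j → P i * P j = P j * P i) →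
    (∀ i j, i ≠ j → f i * P j = P j * f i) →
    (∀ i j, i ≠ j → g i * P j = P j * g i) →
    finrank ℂ ↥(⨅ i, LinearMap.ker (P i)) * 2 ^ k = finrank ℂ V
  | 0, V, _, _, _, P, f, g, _, _, _, _, _, _, _ => by
    have h : (⨅ i : Fin 0, LinearMap.ker (P i)) = ⊤ := iInf_of_empty _
    rw [h, pow_zero, mul_one]
    exact finrank_top ℂ V
  | (k + 1), V, _, _, _, P, f, g, hfg, hgf, hff, hgg, hPP, hfP, hgP => by
    set W := LinearMap.ker (P 0) with hW
    have hinv : ∀ (T : Module.End ℂ V), T * P 0 = P 0 * T → ∀ x ∈ W, T x ∈ W := by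
      intro T hT x hx
      have hPx : P 0 x = 0 := hx
      have := congrArg (fun S : Module.End ℂ V => S x) hT
      simp only [Module.End.mul_apply] at this
      simp only [hW, LinearMap.mem_ker, ← this, hPx, map_zero]
    have hinvP : ∀ i : Fin k, ∀ x ∈ W, P i.succ x ∈ W :=
      fun i => hinv _ ((hPP i.succ 0 (Fin.succ_ne_zero i)))
    have hinvf : ∀ i : Fin k, ∀ x ∈ W, f i.succ x ∈ W :=
      fun i => hinv _ ((hfP i.succ 0 (Fin.succ_ne_zero i)))
    have hinvg : ∀ i : Fin k, ∀ x ∈ W, g i.succ x ∈ W :=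
      fun i => hinv _ ((hgP i.succ 0 (Fin.succ_ne_zero i)))
    set P' : Fin k → Module.End ℂ W := fun i => (P i.succ).restrict (hinvP i) with hP'
    set f' : Fin k → Module.End ℂ W := fun i => (f i.succ).restrict (hinvf i) with hf'
    set g' : Fin k → Module.End ℂ W := fun i => (g i.succ).restrict (hinvg i) with hg'
    have restrict_eq_of_eq : ∀ (a : Module.End ℂ V) (ha : ∀ x ∈ W, a x ∈ W)
        (b : Module.End ℂ V) (hb : ∀ x ∈ W, b x ∈ W), a = b →
        a.restrict ha = b.restrict hb := by
      rintro a ha b hb rfl; rfl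
    have ih := dim_joint_ker k W P' f' g'
      (fun i => by
        rw [hP', hf', hg', restrict_mul]
        exact restrict_eq_of_eq _ _ _ _ (hfg i.succ))
      (fun i => by
        have h1 : ∀ x ∈ W, (1 - P i.succ) x ∈ W := by
          intro x hx
          have : (1 - P i.succ) x = x - P i.succ x := by simp
          rw [this]
          exact Submodule.sub_mem _ hx (hinvP i x hx)
        rw [hg', hf', restrict_mul]
        have : (g i.succ * f i.succ).restrict (fun x hx => hinvg i _ (hinvf i x hx))
            = (1 - P i.succ).restrict h1 :=
          restrict_eq_of_eq _ _ _ _ (hgf i.succ)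
        rw [this]
        ext x
        simp [LinearMap.restrict_apply, LinearMap.sub_apply, hP'])
      (fun i => by
        rw [hf', restrict_mul]
        have : (f i.succ * f i.succ).restrict (fun x hx => hinvf i _ (hinvf i x hx))
            = (0 : Module.End ℂ V).restrict (fun x hx => by simpa using Submodule.zero_mem W) :=
          restrict_eq_of_eq _ _ _ _ (hff i.succ)
        rw [this]; ext x; simp [LinearMap.restrict_apply])
      (fun i => by
        rw [hg', restrict_mul]
        have : (g i.succ * g i.succ).restrict (fun x hx => hinvg i _ (hinvg i x hx))
            = (0 : Module.End ℂ V).restrict (fun x hx => by simpa using Submodule.zero_mem W) :=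
          restrict_eq_of_eq _ _ _ _ (hgg i.succ)
        rw [this]; ext x; simp [LinearMap.restrict_apply])
      (fun i j hij => by
        rw [hP', restrict_mul, restrict_mul]
        exact restrict_eq_of_eq _ _ _ _ (hPP i.succ j.succ (fun h => hij (Fin.succ_injective _ h))))
      (fun i j hij => by
        rw [hP', hf', restrict_mul, restrict_mul]
        exact restrict_eq_of_eq _ _ _ _ (hfP i.succ j.succ (fun h => hij (Fin.succ_injective _ h))))
      (fun i j hij => by
        rw [hP', hg', restrict_mul, restrict_mul]
        exact restrict_eq_of_eq _ _ _ _ (hgP i.succ j.succ (fun h => hij (Fin.succ_injective _ h))))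
    -- identify the two infima
    have hker : ∀ i : Fin k, LinearMap.ker (P' i)
        = Submodule.comap W.subtype (LinearMap.ker (P i.succ)) := by
      intro i
      ext ⟨x, hx⟩
      simp only [LinearMap.mem_ker, Submodule.mem_comap, Submodule.subtype_apply]
      constructor
      · intro h
        have := congrArg Subtype.val h
        simpa [LinearMap.restrict_apply, hP'] using this
      · intro h
        apply Subtype.ext
        simpa [LinearMap.restrict_apply, hP'] using h
    have hiInf : (⨅ i : Fin k, LinearMap.ker (P' i))
        = Submodule.comap W.subtype (⨅ i : Fin k, LinearMap.ker (P i.succ)) := by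
      rw [Submodule.comap_iInf]
      exact iInf_congr hker
    set U := ⨅ i : Fin k, LinearMap.ker (P i.succ) with hU
    have hsplit : (⨅ i : Fin (k + 1), LinearMap.ker (P i)) = W ⊓ U := by
      rw [iInf_fin_succ (fun i => LinearMap.ker (P i))]
    have hcomap : Submodule.comap W.subtype U = Submodule.comap W.subtype (W ⊓ U) := by
      ext ⟨x, hx⟩
      simp only [Submodule.mem_comap, Submodule.subtype_apply, Submodule.mem_inf]
      exact ⟨fun h => ⟨hx, h⟩, fun h => h.2⟩
    have heq : finrank ℂ ↥(⨅ i : Fin k, LinearMap.ker (P' i))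
        = finrank ℂ ↥(⨅ i : Fin (k + 1), LinearMap.ker (P i)) := by
      rw [hiInf, hcomap, hsplit]
      exact (Submodule.comapSubtypeEquivOfLe inf_le_left).finrank_eq
    have hhalf : 2 * finrank ℂ W = finrank ℂ V :=
      half_dim (P 0) (f 0) (g 0) (hfg 0) (hgf 0) (hff 0) (hgg 0)
    rw [heq] at ih
    rw [pow_succ, ← mul_assoc, ih]
    omega
end DimLemmas


set_option maxHeartbeats 1000000 in
/-- The Majorana chain Hamiltonian on a triangulated pin⁻ interval with `n ≥ 2` vertices
(and `n - 1` edges, with combinatorial pin⁻ data `t`) has all eigenvalues real and at least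
`-(n-1)/2`, and its ground state eigenspace (eigenvalue `-(n-1)/2`) is two-dimensional. -/
theorem majorana_chain_interval_ground_state
    (n : ℕ) (hn : 2 ≤ n) (t : Fin (n - 1) → ZMod 2)
    (H : Module.End ℂ (ExteriorAlgebra ℂ (Fin n → ℂ)))
    (hH : H = (1/2 : ℂ) • ∑ i : Fin (n - 1),
      ((-1 : ℂ) ^ (t i).val) •
        (majoranaC (⟨i.val + 1, by have := i.isLt; omega⟩ : Fin n) ∘ₗ
          majoranaD (⟨i.val, by have := i.isLt; omega⟩ : Fin n))) :
    (∀ μ : ℂ, H.HasEigenvalue μ → μ.im = 0 ∧ -((n : ℝ) - 1)/2 ≤ μ.re) ∧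
    Module.finrank ℂ (Module.End.eigenspace H (-((n : ℂ) - 1)/2)) = 2 := by
  classical
  have hH' : H = (2⁻¹ : ℂ) • ∑ i : Fin (n - 1), Maj.AE t i := by
    rw [hH, one_div]
    congr 1
  have hidem : ∀ i, Maj.PE t i * Maj.PE t i = Maj.PE t i := fun i =>
    idem_of _ _ _ rfl (Maj.gf_eq t i) (Maj.ff_eq t i) (Maj.gg_eq t i)
  have hcommAll : ∀ i ∈ (Finset.univ : Finset (Fin (n - 1))), ∀ j ∈ Finset.univ,
      Maj.PE t i * Maj.PE t j = Maj.PE t j * Maj.PE t i := by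
    intro i _ j _
    rcases eq_or_ne i j with rfl | h
    · rfl
    · exact Maj.PP_comm t h
  have hsum : (∑ i : Fin (n - 1), Maj.PE t i)
      = (((n - 1 : ℕ) : ℂ)/2) • (1 : Module.End ℂ (ExteriorAlgebra ℂ (Fin n → ℂ))) + H := by
    rw [hH']
    calc ∑ i : Fin (n - 1), Maj.PE t i
        = ∑ i : Fin (n - 1), ((2⁻¹ : ℂ) • 1 + (2⁻¹ : ℂ) • Maj.AE t i) :=
          Finset.sum_congr rfl fun i _ => by rw [Maj.PE_eq, smul_add]
      _ = (∑ _i : Fin (n - 1), (2⁻¹ : ℂ) •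
            (1 : Module.End ℂ (ExteriorAlgebra ℂ (Fin n → ℂ))))
          + ∑ i : Fin (n - 1), (2⁻¹ : ℂ) • Maj.AE t i := Finset.sum_add_distrib
      _ = (((n - 1 : ℕ) : ℂ)/2) • 1 + (2⁻¹ : ℂ) • ∑ i : Fin (n - 1), Maj.AE t i := by
          rw [Finset.sum_const, Finset.card_univ, Fintype.card_fin, ← Finset.smul_sum,
            ← Nat.cast_smul_eq_nsmul ℂ, smul_smul, div_eq_mul_inv]
  have hcastE : ∀ m : ℕ, ((m : Module.End ℂ (ExteriorAlgebra ℂ (Fin n → ℂ))))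
      = (m : ℂ) • 1 := fun m => by
    rw [← map_natCast (algebraMap ℂ (Module.End ℂ (ExteriorAlgebra ℂ (Fin n → ℂ)))) m,
      Algebra.algebraMap_eq_smul_one]
  have hcard : (Finset.univ : Finset (Fin (n - 1))).card = n - 1 := by simp
  have hcast1 : ((n - 1 : ℕ) : ℂ) = (n : ℂ) - 1 := by
    rw [Nat.cast_sub (by omega : 1 ≤ n), Nat.cast_one]
  constructor
  · -- all eigenvalues real and ≥ -(n-1)/2
    intro μ hμ
    obtain ⟨x, hx⟩ := hμ.exists_hasEigenvector
    have hν : (∑ i : Fin (n - 1), Maj.PE t i) x = (μ + ((n - 1 : ℕ) : ℂ)/2) • x := by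
      rw [hsum, LinearMap.add_apply, LinearMap.smul_apply, Module.End.one_apply,
        hx.apply_eq_smul, ← add_smul, add_comm]
    have KK := key_annihilate Finset.univ (Maj.PE t) (fun i _ => hidem i) hcommAll
    rw [hcard] at KK
    have KK' : PP (fun m => (∑ i : Fin (n - 1), Maj.PE t i) - (m : ℂ) • 1) (n - 1 + 1) = 0 := by
      rw [PP_congr (fun m => by rw [← hcastE m]) (n - 1 + 1)]
      exact KK
    have happ := congrArg (fun T : Module.End ℂ (ExteriorAlgebra ℂ (Fin n → ℂ)) => T x) KK'
    simp only [LinearMap.zero_apply] at happ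
    rw [PP_eigen _ x _ hν (fun m => (m : ℂ)) (n - 1 + 1)] at happ
    have hprod : (∏ m ∈ Finset.range (n - 1 + 1), ((μ + ((n - 1 : ℕ) : ℂ)/2) - m)) = 0 :=
      (smul_eq_zero.mp happ).resolve_right hx.2
    obtain ⟨m, _, hfac⟩ := Finset.prod_eq_zero_iff.mp hprod
    have hmν : μ = (m : ℂ) - ((n - 1 : ℕ) : ℂ)/2 := by
      have h0 := sub_eq_zero.mp hfac
      linear_combination h0
    have hreal : μ = (((m : ℝ) - ((n - 1 : ℕ) : ℝ)/2 : ℝ) : ℂ) := by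
      rw [hmν]; push_cast; ring
    constructor
    · rw [hreal, Complex.ofReal_im]
    · rw [hreal, Complex.ofReal_re]
      have h1 : ((n - 1 : ℕ) : ℝ) = (n : ℝ) - 1 := by
        rw [Nat.cast_sub (by omega : 1 ≤ n), Nat.cast_one]
      rw [h1]
      have h2 : (0 : ℝ) ≤ (m : ℝ) := Nat.cast_nonneg m
      linarith
  · -- ground state space is 2-dimensional
    have hesp : Module.End.eigenspace H (-((n : ℂ) - 1)/2)
        = LinearMap.ker (∑ i : Fin (n - 1), Maj.PE t i) := by
      rw [Module.End.eigenspace_def]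
      congr 1
      rw [hsum, hcast1]
      module
    have hker : LinearMap.ker (∑ i : Fin (n - 1), Maj.PE t i)
        = ⨅ i, LinearMap.ker (Maj.PE t i) := by
      apply le_antisymm
      · intro x hx
        have hSx : (∑ i : Fin (n - 1), Maj.PE t i) x = 0 := hx
        rw [Submodule.mem_iInf]
        intro j
        rw [LinearMap.mem_ker]
        have GG := ground_annihilate Finset.univ (Maj.PE t) (fun i _ => hidem i) hcommAll
          j (Finset.mem_univ j)
        rw [hcard] at GG
        have GG' : Maj.PE t j * PP (fun m =>
            (∑ i : Fin (n - 1), Maj.PE t i) - ((m : ℂ) + 1) • 1) (n - 1) = 0 := by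
          rw [PP_congr (fun m => by
            rw [add_smul, one_smul, ← hcastE m]) (n - 1)]
          exact GG
        have happ := congrArg
          (fun T : Module.End ℂ (ExteriorAlgebra ℂ (Fin n → ℂ)) => T x) GG'
        simp only [Module.End.mul_apply, LinearMap.zero_apply] at happ
        have hS0 : (∑ i : Fin (n - 1), Maj.PE t i) x = (0 : ℂ) • x := by
          rw [hSx, zero_smul]
        rw [PP_eigen (∑ i : Fin (n - 1), Maj.PE t i) x 0 hS0 (fun m => (m : ℂ) + 1) (n - 1),
          map_smul] at happ
        have hne : (∏ m ∈ Finset.range (n - 1), ((0 : ℂ) - ((m : ℂ) + 1))) ≠ 0 := by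
          apply Finset.prod_ne_zero_iff.mpr
          intro m _
          have h1 : ((m : ℂ) + 1) ≠ 0 := Nat.cast_add_one_ne_zero m
          intro hc
          apply h1
          linear_combination -hc
        exact (smul_eq_zero.mp happ).resolve_left hne
      · intro x hx
        rw [Submodule.mem_iInf] at hx
        rw [LinearMap.mem_ker, LinearMap.sum_apply]
        exact Finset.sum_eq_zero fun i _ => hx i
    rw [hesp, hker]
    have hdim := dim_joint_ker (n - 1) (ExteriorAlgebra ℂ (Fin n → ℂ))
      (Maj.PE t) (Maj.fE t) (Maj.gE t)
      (fun i => rfl) (Maj.gf_eq t) (Maj.ff_eq t) (Maj.gg_eq t)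
      (fun i j h => Maj.PP_comm t h) (fun i j h => Maj.fP_comm t h)
      (fun i j h => Maj.gP_comm t h)
    rw [Maj.finrank_exterior] at hdim
    have h2n : 2 ^ n = 2 * 2 ^ (n - 1) := by
      rw [← pow_succ']
      congr 1
      omega
    rw [h2n] at hdim
    have hpos : 0 < 2 ^ (n - 1) := Nat.pow_pos (by norm_num)
    exact Nat.eq_of_mul_eq_mul_right hpos (by rw [hdim, mul_comm])
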